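/- For every positive integer n, the polynomial f = Π_{k=1}^{n} (x^{2^{k−1}} − 1) ∈ ℤ[x] has height 1, has degree 2^n − 1, and is divisible by (x−1)^n. -/

import Mathlib

open Polynomial

/-- Height of an integer polynomial (as a real number). -/
noncomputable def htZ (p : Polynomial ℤ) : ℝ := ⨆ i, |(p.coeff i : ℝ)|

private lemma myGeomSumTwo (n : ℕ) : ∑ k ∈ Finset.range n, 2 ^ k = 2 ^ n - 1 := by
  induction n with
  | zero => simp
  | succ n ih =>
    rw [Finset.sum_range_succ, ih, pow_succ]
    have : 1 ≤ 2 ^ n := Nat.one_le_two_pow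
    omega

private lemma myMonicFactor (k : ℕ) : ((X : Polynomial ℤ) ^ (2 ^ k) - 1).Monic := by
  have h : ((X : Polynomial ℤ) ^ (2 ^ k) - 1) = X ^ (2 ^ k) - C 1 := by simp
  rw [h]
  exact monic_X_pow_sub_C _ (by positivity : (0:ℕ) < 2 ^ k).ne'

private lemma myKey (n : ℕ) :
    (∏ k ∈ Finset.range n, ((X : Polynomial ℤ) ^ (2 ^ k) - 1)).natDegree = 2 ^ n - 1 ∧
    ∀ i, |(∏ k ∈ Finset.range n, ((X : Polynomial ℤ) ^ (2 ^ k) - 1)).coeff i| ≤ 1 := by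
  induction n with
  | zero => constructor
            · simp
            · intro i
      -- coeff of 1
              rcases Nat.eq_zero_or_pos i with h | h
              · simp [h]
              · simp [Polynomial.coeff_one, h.ne']
  | succ n ih =>
    obtain ⟨hdeg, hcoeff⟩ := ih
    set g := ∏ k ∈ Finset.range n, ((X : Polynomial ℤ) ^ (2 ^ k) - 1) with hg
    have hprod : ∏ k ∈ Finset.range (n + 1), ((X : Polynomial ℤ) ^ (2 ^ k) - 1)
        = g * (X ^ (2 ^ n) - 1) := by rw [Finset.prod_range_succ]
    have hmonic : g.Monic := monic_prod_of_monic _ _ fun k _ => myMonicFactor k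
    have hdeg' : (g * (X ^ (2 ^ n) - 1)).natDegree = 2 ^ (n + 1) - 1 := by
      rw [Polynomial.natDegree_mul hmonic.ne_zero (myMonicFactor n).ne_zero, hdeg]
      have h1 : ((X : Polynomial ℤ) ^ (2 ^ n) - 1) = X ^ (2 ^ n) - C 1 := by simp
      rw [h1, Polynomial.natDegree_X_pow_sub_C]
      have : 1 ≤ 2 ^ n := Nat.one_le_two_pow
      rw [pow_succ]
      omega
    constructor
    · rw [hprod]; exact hdeg'
    · intro i
      rw [hprod]
      have hexp : (g * (X ^ (2 ^ n) - 1)) = g * X ^ (2 ^ n) - g := by ring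
      rw [hexp, Polynomial.coeff_sub, Polynomial.coeff_mul_X_pow']
      rcases lt_or_ge i (2 ^ n) with h | h
      · simp only [if_neg (not_le.mpr h), zero_sub, abs_neg]
        exact hcoeff i
      · have hzero : g.coeff i = 0 := by
          apply Polynomial.coeff_eq_zero_of_natDegree_lt
          rw [hdeg]
          have : 1 ≤ 2 ^ n := Nat.one_le_two_pow
          omega
        simp only [if_pos h, hzero, sub_zero]
        exact hcoeff _

theorem height_one_multiple_of_power (n : ℕ) (hn : 1 ≤ n)
    (f : Polynomial ℤ) (hf : f = ∏ k ∈ Finset.range n, (X ^ (2 ^ k) - 1)) :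
    htZ f = 1 ∧ f.natDegree = 2 ^ n - 1 ∧ (X - 1) ^ n ∣ f := by
  obtain ⟨hdeg, hcoeff⟩ := myKey n
  have hc0 : |f.coeff 0| = 1 := by
    rw [hf, Polynomial.coeff_zero_eq_eval_zero, Polynomial.eval_prod]
    simp only [Polynomial.eval_sub, Polynomial.eval_pow, Polynomial.eval_X,
      Polynomial.eval_one]
    have h2 : ∀ k ∈ Finset.range n, (0 : ℤ) ^ (2 ^ k) - 1 = -1 := by
      intro k _
      rw [zero_pow (pow_pos (by norm_num : (0:ℕ) < 2) k).ne']
      ring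
    rw [Finset.prod_congr rfl h2, Finset.prod_const]
    simp [abs_pow]
  refine ⟨?_, hf ▸ hdeg, ?_⟩
  · -- htZ
    unfold htZ
    have hb : ∀ i, |(f.coeff i : ℝ)| ≤ 1 := by
      intro i
      rw [← Int.cast_abs]
      exact_mod_cast hf ▸ hcoeff i
    have hbdd : BddAbove (Set.range fun i => |(f.coeff i : ℝ)|) := by
      refine ⟨1, ?_⟩
      rintro x ⟨i, rfl⟩
      exact hb i
    apply le_antisymm
    · exact ciSup_le hb
    · have := le_ciSup hbdd 0
      calc (1 : ℝ) = |(f.coeff 0 : ℝ)| := by rw [← Int.cast_abs, hc0]; norm_num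
        _ ≤ _ := this
  · -- divisibility
    rw [hf]
    have : ((X : Polynomial ℤ) - 1) ^ n = ∏ _k ∈ Finset.range n, ((X : Polynomial ℤ) - 1) := by
      rw [Finset.prod_const, Finset.card_range]
    rw [this]
    apply Finset.prod_dvd_prod_of_dvd
    intro k _
    have := sub_dvd_pow_sub_pow (X : Polynomial ℤ) 1 (2 ^ k)
    simpa using this
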